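/- Let n ≥ 7 and let s′, t′ ≥ 1 with s′ + t′ = n − 3. Let H₃^{s′,t′} be the (unsigned) simple graph on n vertices obtained from the underlying graph of Ġ^{s′,t′} together with one additional vertex w, by joining w to all of u₁, …, u_{s′}, v₁, …, v_{t′} (but not to u or v). Then λ₁(H₃^{s′,t′}) < (√(n² − 8) + n − 4)/2, where λ₁ denotes the largest adjacency eigenvalue. -/
import Mathlib


/-- The adjacency matrix of the unsigned graph `H₃^{s,t}` on `s + t + 3` vertices:
vertex `0 = u`, vertex `1 = v`, vertices `2, …, s+1` are `u₁, …, u_s`, vertices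
`s+2, …, s+t+1` are `v₁, …, v_t`, and vertex `s+t+2 = w`.  It is the underlying graph
of `Ġ^{s,t}` (the clique on `u₁, …, u_s, v₁, …, v_t`, the edge `uv`, the edges `uuᵢ` and
`vvⱼ`) together with the extra vertex `w` joined to all of `u₁, …, u_s, v₁, …, v_t`
(but not to `u` or `v`). -/
def h3Mat (s t : ℕ) : Matrix (Fin (s + t + 3)) (Fin (s + t + 3)) ℝ :=
  Matrix.of fun x y =>
    if x = y then 0
    else
      if min x.val y.val = 0 ∧ max x.val y.val = 1 then 1
      else if min x.val y.val = 0 then (if max x.val y.val < s + 2 then 1 else 0)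
      else if min x.val y.val = 1 then
        (if s + 2 ≤ max x.val y.val ∧ max x.val y.val ≤ s + t + 1 then 1 else 0)
      else 1

/-- The largest (real) eigenvalue `λ₁` of a real matrix. -/
noncomputable def lam1 {V : Type*} [Fintype V] (A : Matrix V V ℝ) : ℝ :=
  sSup {μ : ℝ | ∃ x : V → ℝ, x ≠ 0 ∧ A.mulVec x = μ • x}

noncomputable def yvec (s t : ℕ) (a w : ℝ) : Fin (s+t+3) → ℝ :=
  fun j => if j.val = 0 ∨ j.val = 1 then a else if j.val = s+t+2 then w else 1

lemma row0 (s t : ℕ) (a w : ℝ) (i : Fin (s+t+3)) (hi : i.val = 0) :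
    (h3Mat s t).mulVec (yvec s t a w) i = a + s := by
  simp only [Matrix.mulVec, dotProduct, yvec]
  have step : ∀ j : Fin (s+t+3),
      h3Mat s t i j * (if j.val = 0 ∨ j.val = 1 then a else if j.val = s+t+2 then w else 1)
      = (if j.val = 1 then a else 0) + (if 2 ≤ j.val ∧ j.val < s + 2 then (1:ℝ) else 0) := by
    intro j
    have hj := j.isLt
    simp only [h3Mat, Matrix.of_apply, Fin.ext_iff, hi]
    split_ifs <;> first | ring1 | (exfalso; omega)
  rw [Finset.sum_congr rfl fun j _ => step j, Finset.sum_add_distrib]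
  have e1 : ∑ j : Fin (s+t+3), (if j.val = 1 then a else 0) = a := by
    rw [Fin.sum_univ_eq_sum_range (fun j => if j = 1 then a else 0)]
    rw [Finset.sum_ite_eq' (Finset.range (s+t+3)) 1 (fun _ => a)]
    simp
  have e2 : ∑ j : Fin (s+t+3), (if 2 ≤ j.val ∧ j.val < s + 2 then (1:ℝ) else 0) = s := by
    rw [Fin.sum_univ_eq_sum_range (fun j => if 2 ≤ j ∧ j < s + 2 then (1:ℝ) else 0)]
    rw [Finset.sum_boole]
    have : (Finset.range (s+t+3)).filter (fun j => 2 ≤ j ∧ j < s + 2) = Finset.Ico 2 (s+2) := by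
      ext j; simp [Finset.mem_filter, Finset.mem_range, Finset.mem_Ico]; omega
    rw [this]; simp
  rw [e1, e2]

lemma row1 (s t : ℕ) (a w : ℝ) (i : Fin (s+t+3)) (hi : i.val = 1) :
    (h3Mat s t).mulVec (yvec s t a w) i = a + t := by
  simp only [Matrix.mulVec, dotProduct, yvec]
  have step : ∀ j : Fin (s+t+3),
      h3Mat s t i j * (if j.val = 0 ∨ j.val = 1 then a else if j.val = s+t+2 then w else 1)
      = (if j.val = 0 then a else 0) + (if s + 2 ≤ j.val ∧ j.val < s + t + 2 then (1:ℝ) else 0) := by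
    intro j
    have hj := j.isLt
    simp only [h3Mat, Matrix.of_apply, Fin.ext_iff, hi]
    split_ifs <;> first | ring1 | (exfalso; omega)
  rw [Finset.sum_congr rfl fun j _ => step j, Finset.sum_add_distrib]
  have e1 : ∑ j : Fin (s+t+3), (if j.val = 0 then a else 0) = a := by
    rw [Fin.sum_univ_eq_sum_range (fun j => if j = 0 then a else 0)]
    rw [Finset.sum_ite_eq' (Finset.range (s+t+3)) 0 (fun _ => a)]
    simp
  have e2 : ∑ j : Fin (s+t+3), (if s + 2 ≤ j.val ∧ j.val < s + t + 2 then (1:ℝ) else 0) = t := by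
    rw [Fin.sum_univ_eq_sum_range (fun j => if s + 2 ≤ j ∧ j < s + t + 2 then (1:ℝ) else 0)]
    rw [Finset.sum_boole]
    have : (Finset.range (s+t+3)).filter (fun j => s + 2 ≤ j ∧ j < s + t + 2)
        = Finset.Ico (s+2) (s+t+2) := by
      ext j; simp [Finset.mem_filter, Finset.mem_range, Finset.mem_Ico]; omega
    rw [this]; simp
  rw [e1, e2]

lemma rowU (s t : ℕ) (hs : 1 ≤ s) (a w : ℝ) (i : Fin (s+t+3))
    (hi2 : 2 ≤ i.val) (hi3 : i.val ≤ s + 1) :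
    (h3Mat s t).mulVec (yvec s t a w) i = a + ((s:ℝ) + t - 1) + w := by
  simp only [Matrix.mulVec, dotProduct, yvec]
  have step : ∀ j : Fin (s+t+3),
      h3Mat s t i j * (if j.val = 0 ∨ j.val = 1 then a else if j.val = s+t+2 then w else 1)
      = (if j.val = 0 then a else 0)
        + (if 2 ≤ j.val ∧ j.val < s + t + 2 ∧ j.val ≠ i.val then (1:ℝ) else 0)
        + (if j.val = s+t+2 then w else 0) := by
    intro j
    have hj := j.isLt
    simp only [h3Mat, Matrix.of_apply, Fin.ext_iff]
    split_ifs <;> first | ring1 | (exfalso; omega)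
  rw [Finset.sum_congr rfl fun j _ => step j, Finset.sum_add_distrib, Finset.sum_add_distrib]
  have e1 : ∑ j : Fin (s+t+3), (if j.val = 0 then a else 0) = a := by
    rw [Fin.sum_univ_eq_sum_range (fun j => if j = 0 then a else 0)]
    rw [Finset.sum_ite_eq' (Finset.range (s+t+3)) 0 (fun _ => a)]
    simp
  have e3 : ∑ j : Fin (s+t+3), (if j.val = s+t+2 then w else 0) = w := by
    rw [Fin.sum_univ_eq_sum_range (fun j => if j = s+t+2 then w else 0)]
    rw [Finset.sum_ite_eq' (Finset.range (s+t+3)) (s+t+2) (fun _ => w)]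
    simp
  have e2 : ∑ j : Fin (s+t+3), (if 2 ≤ j.val ∧ j.val < s + t + 2 ∧ j.val ≠ i.val then (1:ℝ) else 0)
      = (s:ℝ) + t - 1 := by
    rw [Fin.sum_univ_eq_sum_range (fun j => if 2 ≤ j ∧ j < s + t + 2 ∧ j ≠ i.val then (1:ℝ) else 0)]
    rw [Finset.sum_boole]
    have hmem : i.val ∈ Finset.Ico 2 (s+t+2) := by
      simp [Finset.mem_Ico]; omega
    have : (Finset.range (s+t+3)).filter (fun j => 2 ≤ j ∧ j < s + t + 2 ∧ j ≠ i.val)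
        = (Finset.Ico 2 (s+t+2)).erase i.val := by
      ext j
      simp [Finset.mem_filter, Finset.mem_range, Finset.mem_Ico, Finset.mem_erase]
      omega
    rw [this, Finset.card_erase_of_mem hmem]
    rw [Nat.card_Ico]
    have : s + t + 2 - 2 - 1 = s + t - 1 := by omega
    rw [this]
    push_cast [Nat.cast_sub (by omega : 1 ≤ s + t)]
    ring
  rw [e1, e2, e3]

lemma rowT (s t : ℕ) (ht : 1 ≤ t) (a w : ℝ) (i : Fin (s+t+3))
    (hi2 : s + 2 ≤ i.val) (hi3 : i.val ≤ s + t + 1) :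
    (h3Mat s t).mulVec (yvec s t a w) i = a + ((s:ℝ) + t - 1) + w := by
  simp only [Matrix.mulVec, dotProduct, yvec]
  have step : ∀ j : Fin (s+t+3),
      h3Mat s t i j * (if j.val = 0 ∨ j.val = 1 then a else if j.val = s+t+2 then w else 1)
      = (if j.val = 1 then a else 0)
        + (if 2 ≤ j.val ∧ j.val < s + t + 2 ∧ j.val ≠ i.val then (1:ℝ) else 0)
        + (if j.val = s+t+2 then w else 0) := by
    intro j
    have hj := j.isLt
    simp only [h3Mat, Matrix.of_apply, Fin.ext_iff]
    split_ifs <;> first | ring1 | (exfalso; omega)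
  rw [Finset.sum_congr rfl fun j _ => step j, Finset.sum_add_distrib, Finset.sum_add_distrib]
  have e1 : ∑ j : Fin (s+t+3), (if j.val = 1 then a else 0) = a := by
    rw [Fin.sum_univ_eq_sum_range (fun j => if j = 1 then a else 0)]
    rw [Finset.sum_ite_eq' (Finset.range (s+t+3)) 1 (fun _ => a)]
    simp
  have e3 : ∑ j : Fin (s+t+3), (if j.val = s+t+2 then w else 0) = w := by
    rw [Fin.sum_univ_eq_sum_range (fun j => if j = s+t+2 then w else 0)]
    rw [Finset.sum_ite_eq' (Finset.range (s+t+3)) (s+t+2) (fun _ => w)]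
    simp
  have e2 : ∑ j : Fin (s+t+3), (if 2 ≤ j.val ∧ j.val < s + t + 2 ∧ j.val ≠ i.val then (1:ℝ) else 0)
      = (s:ℝ) + t - 1 := by
    rw [Fin.sum_univ_eq_sum_range (fun j => if 2 ≤ j ∧ j < s + t + 2 ∧ j ≠ i.val then (1:ℝ) else 0)]
    rw [Finset.sum_boole]
    have hmem : i.val ∈ Finset.Ico 2 (s+t+2) := by
      simp [Finset.mem_Ico]; omega
    have : (Finset.range (s+t+3)).filter (fun j => 2 ≤ j ∧ j < s + t + 2 ∧ j ≠ i.val)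
        = (Finset.Ico 2 (s+t+2)).erase i.val := by
      ext j
      simp [Finset.mem_filter, Finset.mem_range, Finset.mem_Ico, Finset.mem_erase]
      omega
    rw [this, Finset.card_erase_of_mem hmem]
    rw [Nat.card_Ico]
    have : s + t + 2 - 2 - 1 = s + t - 1 := by omega
    rw [this]
    push_cast [Nat.cast_sub (by omega : 1 ≤ s + t)]
    ring
  rw [e1, e2, e3]

lemma rowW (s t : ℕ) (a w : ℝ) (i : Fin (s+t+3)) (hi : i.val = s+t+2) :
    (h3Mat s t).mulVec (yvec s t a w) i = (s:ℝ) + t := by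
  simp only [Matrix.mulVec, dotProduct, yvec]
  have step : ∀ j : Fin (s+t+3),
      h3Mat s t i j * (if j.val = 0 ∨ j.val = 1 then a else if j.val = s+t+2 then w else 1)
      = (if 2 ≤ j.val ∧ j.val < s + t + 2 then (1:ℝ) else 0) := by
    intro j
    have hj := j.isLt
    simp only [h3Mat, Matrix.of_apply, Fin.ext_iff, hi]
    split_ifs <;> first | ring1 | (exfalso; omega)
  rw [Finset.sum_congr rfl fun j _ => step j]
  rw [Fin.sum_univ_eq_sum_range (fun j => if 2 ≤ j ∧ j < s + t + 2 then (1:ℝ) else 0)]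
  rw [Finset.sum_boole]
  have : (Finset.range (s+t+3)).filter (fun j => 2 ≤ j ∧ j < s + t + 2)
      = Finset.Ico 2 (s+t+2) := by
    ext j; simp [Finset.mem_filter, Finset.mem_range, Finset.mem_Ico]; omega
  rw [this]; simp


lemma eig_le_aux {N : ℕ} (A : Matrix (Fin N) (Fin N) ℝ) (hA : ∀ i j, 0 ≤ A i j)
    (y : Fin N → ℝ) (hy : ∀ i, 0 < y i) (b : ℝ)
    (hb : ∀ i, A.mulVec y i ≤ b * y i)
    (μ : ℝ) (x : Fin N → ℝ) (hx : x ≠ 0) (hμx : A.mulVec x = μ • x) : μ ≤ b := by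
  obtain ⟨j0, hj0⟩ : ∃ j, x j ≠ 0 := Function.ne_iff.mp hx
  obtain ⟨i0, -, hi0⟩ := Finset.exists_max_image Finset.univ (fun i => |x i| / y i)
    ⟨j0, Finset.mem_univ _⟩
  set r := |x i0| / y i0 with hr
  have hr_pos : 0 < r := by
    have h1 : |x j0| / y j0 ≤ r := hi0 j0 (Finset.mem_univ _)
    have h2 : 0 < |x j0| / y j0 := div_pos (abs_pos.2 hj0) (hy j0)
    linarith
  have hxr : |x i0| = r * y i0 := (div_mul_cancel₀ _ (ne_of_gt (hy i0))).symm
  have hxi0_pos : 0 < |x i0| := by rw [hxr]; exact mul_pos hr_pos (hy i0)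
  have hxj : ∀ j, |x j| ≤ r * y j := by
    intro j
    have h := hi0 j (Finset.mem_univ _)
    calc |x j| = (|x j| / y j) * y j := (div_mul_cancel₀ _ (ne_of_gt (hy j))).symm
    _ ≤ r * y j := mul_le_mul_of_nonneg_right h (le_of_lt (hy j))
  have h1 : μ * x i0 = ∑ j, A i0 j * x j := by
    have h := congrFun hμx i0
    simp only [Matrix.mulVec, dotProduct, Pi.smul_apply, smul_eq_mul] at h
    exact h.symm
  have h2 : |μ| * |x i0| ≤ b * |x i0| := by
    calc |μ| * |x i0| = |μ * x i0| := (abs_mul μ (x i0)).symm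
    _ = |∑ j, A i0 j * x j| := by rw [h1]
    _ ≤ ∑ j, |A i0 j * x j| := Finset.abs_sum_le_sum_abs _ _
    _ = ∑ j, A i0 j * |x j| := by
        apply Finset.sum_congr rfl; intro j _
        rw [abs_mul, abs_of_nonneg (hA i0 j)]
    _ ≤ ∑ j, A i0 j * (r * y j) :=
        Finset.sum_le_sum fun j _ => mul_le_mul_of_nonneg_left (hxj j) (hA i0 j)
    _ = r * ∑ j, A i0 j * y j := by rw [Finset.mul_sum]; apply Finset.sum_congr rfl; intros; ring
    _ = r * (A.mulVec y i0) := by simp only [Matrix.mulVec, dotProduct]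
    _ ≤ r * (b * y i0) := mul_le_mul_of_nonneg_left (hb i0) (le_of_lt hr_pos)
    _ = b * (r * y i0) := by ring
    _ = b * |x i0| := by rw [← hxr]
  have : |μ| ≤ b := le_of_mul_le_mul_right h2 hxi0_pos
  exact le_trans (le_abs_self μ) this


/-!
STATEMENT 13: Let n ≥ 7 and let s′, t′ ≥ 1 with s′ + t′ = n − 3.  Let H₃^{s′,t′} be the
(unsigned) simple graph on n vertices obtained from the underlying graph of Ġ^{s′,t′}
together with one additional vertex w, by joining w to all of u₁, …, u_{s′}, v₁, …, v_{t′}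
(but not to u or v).  Then λ₁(H₃^{s′,t′}) < (√(n² − 8) + n − 4)/2.
-/

set_option maxHeartbeats 1000000 in
theorem lam1_h3_lt (n s t : ℕ) (hn : 7 ≤ n) (hs : 1 ≤ s) (ht : 1 ≤ t)
    (hst : s + t = n - 3) :
    lam1 (h3Mat s t) < (Real.sqrt ((n : ℝ) ^ 2 - 8) + n - 4) / 2 := by
  set c := (Real.sqrt ((n : ℝ) ^ 2 - 8) + n - 4) / 2 with hc
  set q := Real.sqrt ((n : ℝ) ^ 2 - 8) with hqdef
  have hnR : (7:ℝ) ≤ (n:ℝ) := by exact_mod_cast hn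
  have hq0 : (0:ℝ) ≤ (n:ℝ)^2 - 8 := by nlinarith
  have hq : q ^ 2 = (n:ℝ)^2 - 8 := Real.sq_sqrt hq0
  have hqnn : 0 ≤ q := Real.sqrt_nonneg _
  have hc2 : c^2 = ((n:ℝ)-4)*c + 2*(n:ℝ) - 6 := by rw [hc]; linear_combination hq / 4
  have hmnat : s + t + 3 = n := by omega
  have hmR : (s:ℝ) + t = (n:ℝ) - 3 := by
    have : ((s+t+3 : ℕ) : ℝ) = (n:ℝ) := by exact_mod_cast congrArg (fun k : ℕ => (k:ℝ)) hmnat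
    push_cast at this; linarith
  set m := (s:ℝ) + (t:ℝ) with hmdef
  have hS1 : (1:ℝ) ≤ (s:ℝ) := by exact_mod_cast hs
  have hT1 : (1:ℝ) ≤ (t:ℝ) := by exact_mod_cast ht
  have hm2 : (2:ℝ) ≤ m := by rw [hmdef]; linarith
  have hmc : m < c := by
    have hq1 : (n:ℝ) - 2 < q := by nlinarith [hq, hqnn]
    rw [hc]; rw [hmdef] at hmR ⊢; linarith
  have hc1 : (1:ℝ) < c := by linarith
  have hc0 : (0:ℝ) < c := by linarith
  have hc1' : (0:ℝ) < c - 1 := by linarith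
  set M := max (s:ℝ) (t:ℝ) with hMdef
  have hM1 : (1:ℝ) ≤ M := le_trans hS1 (le_max_left _ _)
  have hMm : M ≤ m - 1 := max_le (by rw [hmdef]; linarith) (by rw [hmdef]; linarith)
  set u1 := M / (c-1) with hu1def
  set r := m / c with hrdef
  have hu1 : u1 * (c-1) = M := div_mul_cancel₀ _ (ne_of_gt hc1')
  have hrc : r * c = m := div_mul_cancel₀ _ (ne_of_gt hc0)
  have hg : u1 < r := by
    rw [hu1def, hrdef, div_lt_div_iff₀ hc1' hc0]
    nlinarith
  set a := u1 + (r - u1)/4 with hadef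
  set δ := (r - u1)/4 with hδdef
  set w := 2*r - a - δ with hwdef
  clear_value q c m M u1 r a δ w
  have hu1pos : (0:ℝ) < u1 := by rw [hu1def]; exact div_pos (by linarith) hc1'
  have hrpos : (0:ℝ) < r := by rw [hrdef]; exact div_pos (by linarith) hc0
  have ha : (0:ℝ) < a := by rw [hadef]; linarith
  have hδpos : (0:ℝ) < δ := by rw [hδdef]; linarith
  have haδ : a + δ < r := by rw [hadef, hδdef]; linarith
  have hw : (0:ℝ) < w := by rw [hwdef]; linarith
  have hnm : (n:ℝ) - 4 = m - 1 := by linarith [hmR]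
  have hcc : c^2 = (m-1)*c + 2*m := by
    rw [hc2, hnm]; linarith [hmR]
  have h2r : 2*r = c - m + 1 := by
    have e1 : (2*r)*c = 2*m := by linear_combination 2*hrc
    have e2 : (c-m+1)*c = 2*m := by linear_combination hcc
    have e3 := e1.trans e2.symm
    exact mul_right_cancel₀ (ne_of_gt hc0) e3
  -- five strict inequalities
  have hP : (0:ℝ) < (r - u1)*(c-1) := mul_pos (sub_pos.2 hg) hc1'
  have key : c*a - a = M + (r-u1)*(c-1)/4 := by rw [hadef]; linear_combination hu1 + (c-1)*hδdef
  have I1 : a + (s:ℝ) < c * a := by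
    have hMS : (s:ℝ) ≤ M := by rw [hMdef]; exact le_max_left _ _
    linarith
  have I2 : a + (t:ℝ) < c * a := by
    have hMT : (t:ℝ) ≤ M := by rw [hMdef]; exact le_max_right _ _
    linarith
  have I3 : a + (m - 1) + w < c := by
    have : a + (m-1) + w = c - δ := by rw [hwdef]; linarith [h2r]
    linarith
  have I5 : m < c * w := by
    have h1 : c * (a + δ) < c * r := mul_lt_mul_of_pos_left haδ hc0
    have h2 : c * r = m := by linear_combination hrc
    have h3 : c * w = 2*m - c*(a+δ) := by rw [hwdef]; linear_combination 2*hrc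
    linarith
  -- the uniform bound b
  set b := max (max ((a+(s:ℝ))/a) ((a+(t:ℝ))/a)) (max (a + (m-1) + w) (m/w)) with hbdef
  have hbc : b < c := by
    apply max_lt (max_lt ?_ ?_) (max_lt I3 ?_)
    · rw [div_lt_iff₀ ha]; linarith [I1]
    · rw [div_lt_iff₀ ha]; linarith [I2]
    · rw [div_lt_iff₀ hw]; linarith [I5]
  clear_value b
  have hA : ∀ i j, 0 ≤ h3Mat s t i j := by
    intro i j; simp only [h3Mat, Matrix.of_apply]; split_ifs <;> norm_num
  have hy : ∀ i, 0 < yvec s t a w i := by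
    intro i; simp only [yvec]; split_ifs
    · exact ha
    · exact hw
    · norm_num
  have hbnd : ∀ i, (h3Mat s t).mulVec (yvec s t a w) i ≤ b * (yvec s t a w i) := by
    intro i
    have hiv := i.isLt
    rcases (by omega : i.val = 0 ∨ i.val = 1 ∨ (2 ≤ i.val ∧ i.val ≤ s+1)
        ∨ (s+2 ≤ i.val ∧ i.val ≤ s+t+1) ∨ i.val = s+t+2) with h|h|h|h|h
    · rw [row0 s t a w i h]
      have hyi : yvec s t a w i = a := by simp only [yvec]; rw [if_pos (Or.inl h)]
      rw [hyi]
      have h1 : (a+(s:ℝ))/a ≤ b := by rw [hbdef]; exact le_trans (le_max_left _ _) (le_max_left _ _)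
      calc a + (s:ℝ) = ((a+(s:ℝ))/a) * a := by field_simp
      _ ≤ b * a := mul_le_mul_of_nonneg_right h1 (le_of_lt ha)
    · rw [row1 s t a w i h]
      have hyi : yvec s t a w i = a := by simp only [yvec]; rw [if_pos (Or.inr h)]
      rw [hyi]
      have h1 : (a+(t:ℝ))/a ≤ b := by rw [hbdef]; exact le_trans (le_max_right _ _) (le_max_left _ _)
      calc a + (t:ℝ) = ((a+(t:ℝ))/a) * a := by field_simp
      _ ≤ b * a := mul_le_mul_of_nonneg_right h1 (le_of_lt ha)
    · rw [rowU s t hs a w i h.1 h.2]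
      have hyi : yvec s t a w i = 1 := by
        simp only [yvec]; rw [if_neg (by omega), if_neg (by omega)]
      rw [hyi, mul_one]
      have h1 : a + (m-1) + w ≤ b := by rw [hbdef]; exact le_trans (le_max_left _ _) (le_max_right _ _)
      rw [hmdef] at h1; linarith
    · rw [rowT s t ht a w i h.1 h.2]
      have hyi : yvec s t a w i = 1 := by
        simp only [yvec]; rw [if_neg (by omega), if_neg (by omega)]
      rw [hyi, mul_one]
      have h1 : a + (m-1) + w ≤ b := by rw [hbdef]; exact le_trans (le_max_left _ _) (le_max_right _ _)
      rw [hmdef] at h1; linarith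
    · rw [rowW s t a w i h]
      have hyi : yvec s t a w i = w := by
        simp only [yvec]; rw [if_neg (by omega), if_pos h]
      rw [hyi]
      have h1 : m/w ≤ b := by rw [hbdef]; exact le_trans (le_max_right _ _) (le_max_right _ _)
      calc (s:ℝ) + (t:ℝ) = (m/w) * w := by rw [hmdef]; field_simp
      _ ≤ b * w := mul_le_mul_of_nonneg_right h1 (le_of_lt hw)
  have hub : ∀ μ ∈ {μ : ℝ | ∃ x : Fin (s+t+3) → ℝ, x ≠ 0 ∧ (h3Mat s t).mulVec x = μ • x}, μ ≤ b := by
    rintro μ ⟨x, hx, hμ⟩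
    exact eig_le_aux _ hA _ hy b hbnd μ x hx hμ
  unfold lam1
  rcases Set.eq_empty_or_nonempty
      {μ : ℝ | ∃ x : Fin (s+t+3) → ℝ, x ≠ 0 ∧ (h3Mat s t).mulVec x = μ • x} with he|hne
  · rw [he, Real.sSup_empty]; linarith
  · exact lt_of_le_of_lt (csSup_le hne hub) hbc
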